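/- Let H be a complex Hilbert space, S : ℝ → B(H) a strongly continuous one-parameter unitary group, and L a bounded positive self-adjoint operator on H commuting with S_t for every t. For 0 < ξ < 1/‖L‖ set L_ξ = L(1 − ξL)^{−1} and M_ξ = (1 − ξL)^{−1}. Let f_1, g_1, f_2, g_2 ∈ H and define the time-ordered two-point correlation function of the rescaled number operators, C_ξ(t_1,t_2) = ⟨g_1, L_ξ f_1⟩⟨g_2, L_ξ f_2⟩ + (1/ξ) ⟨g_2, L_ξ S_{(t_1−t_2)/ξ} f_1⟩ ⟨g_1, M_ξ S_{(t_2−t_1)/ξ} f_2⟩. Assume that s ↦ ⟨g_2, L S_s f_1⟩⟨g_1, S_{−s} f_2⟩ is integrable on [0,∞) and that there exist ξ_0 > 0 and an integrable function h on [0,∞) with |⟨g_2, L_ξ S_s f_1⟩⟨g_1, M_ξ S_{−s} f_2⟩| ≤ h(s) for all 0 < ξ < ξ_0 and all s ≥ 0. Then for every continuous compactly supported φ : ℝ² → ℂ, lim_{ξ→0⁺} ∫_0^∞ dt_1 ∫_0^{t_1} dt_2 φ(t_1,t_2) C_ξ(t_1,t_2) = ∫_0^∞ dt_1 ∫_0^{t_1}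 dt_2 φ(t_1,t_2) ⟨g_1, L f_1⟩⟨g_2, L f_2⟩ + (∫_0^∞ φ(t,t) dt) · ∫_0^∞ ⟨g_2, L S_s f_1⟩⟨g_1, S_{−s} f_2⟩ ds. -/

import Mathlib

open MeasureTheory Filter
open scoped Topology InnerProductSpace

lemma aux_subst (ξ t₁ : ℝ) (hξ : 0 < ξ) (F G : ℝ → ℂ) :
    (∫ t₂ in (0:ℝ)..t₁, F t₂ * ((1/ξ : ℂ) * G ((t₁ - t₂)/ξ))) =
      ∫ s in (0:ℝ)..(t₁/ξ), F (t₁ - ξ*s) * G s := by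
  have h1 : ∀ t₂ : ℝ, F t₂ * ((1/ξ : ℂ) * G ((t₁ - t₂)/ξ)) =
      (1/ξ : ℂ) * ((fun u => F (t₁ - u) * G (u/ξ)) (t₁ - t₂)) := by
    intro t₂; simp only [sub_sub_cancel]; ring
  simp only [h1]
  rw [intervalIntegral.integral_const_mul,
    intervalIntegral.integral_comp_sub_left (fun u => F (t₁ - u) * G (u/ξ)) t₁,
    sub_self, sub_zero]
  have h2 := intervalIntegral.smul_integral_comp_mul_left
    (a := (0:ℝ)) (b := t₁/ξ) (fun u => F (t₁ - u) * G (u/ξ)) ξ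
  rw [mul_zero, mul_div_cancel₀ _ (ne_of_gt hξ)] at h2
  rw [← h2]
  have h3 : ∀ s : ℝ, (fun u => F (t₁ - u) * G (u/ξ)) (ξ * s) = F (t₁ - ξ*s) * G s := by
    intro s; simp only [mul_div_cancel_left₀ _ (ne_of_gt hξ)]
  simp only [h3]
  rw [Complex.real_smul, ← mul_assoc, one_div,
    inv_mul_cancel₀ (by exact_mod_cast ne_of_gt hξ), one_mul]

lemma aux_ind (T : ℝ) (hT : 0 ≤ T) (G : ℝ → ℂ) :
    (∫ s in Set.Ioi (0:ℝ), Set.indicator (Set.Ioc (0:ℝ) T) G s) = ∫ s in (0:ℝ)..T, G s := by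
  rw [intervalIntegral.integral_of_le hT, integral_indicator measurableSet_Ioc,
    Measure.restrict_restrict measurableSet_Ioc,
    Set.inter_eq_self_of_subset_left Set.Ioc_subset_Ioi_self]

set_option maxHeartbeats 2000000 in
theorem lowDensity_two_point_correlator_convergence
    {H : Type*} [NormedAddCommGroup H] [InnerProductSpace ℂ H] [CompleteSpace H]
    (S : ℝ → (H →L[ℂ] H))
    (hS0 : S 0 = 1)
    (hSadd : ∀ s t : ℝ, S (s + t) = S s * S t)
    (hSunitary : ∀ t : ℝ, S t ∈ unitary (H →L[ℂ] H))
    (hScont : ∀ x : H, Continuous fun t : ℝ => S t x)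
    (L : H →L[ℂ] H) (hL : L.IsPositive)
    (hLS : ∀ t : ℝ, L * S t = S t * L)
    (f₁ g₁ f₂ g₂ : H)
    (hint : IntegrableOn
      (fun s : ℝ => ⟪g₂, L (S s f₁)⟫_ℂ * ⟪g₁, S (-s) f₂⟫_ℂ) (Set.Ici (0 : ℝ)))
    (hdom : ∃ ξ₀ > (0 : ℝ), ∃ hmaj : ℝ → ℝ, IntegrableOn hmaj (Set.Ici (0 : ℝ)) ∧
      ∀ ξ : ℝ, 0 < ξ → ξ < ξ₀ → ∀ s : ℝ, 0 ≤ s →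
        ‖⟪g₂, (L * Ring.inverse (1 - (ξ : ℂ) • L)) (S s f₁)⟫_ℂ *
            ⟪g₁, (Ring.inverse (1 - (ξ : ℂ) • L)) (S (-s) f₂)⟫_ℂ‖ ≤ hmaj s)
    (φ : ℝ × ℝ → ℂ) (hφ : Continuous φ) (hφc : HasCompactSupport φ) :
    Tendsto
      (fun ξ : ℝ =>
        ∫ t₁ in Set.Ioi (0 : ℝ), ∫ t₂ in (0 : ℝ)..t₁, φ (t₁, t₂) *
          (⟪g₁, (L * Ring.inverse (1 - (ξ : ℂ) • L)) f₁⟫_ℂ *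
              ⟪g₂, (L * Ring.inverse (1 - (ξ : ℂ) • L)) f₂⟫_ℂ +
            (1 / ξ : ℂ) *
              (⟪g₂, (L * Ring.inverse (1 - (ξ : ℂ) • L)) (S ((t₁ - t₂) / ξ) f₁)⟫_ℂ *
                ⟪g₁, (Ring.inverse (1 - (ξ : ℂ) • L)) (S ((t₂ - t₁) / ξ) f₂)⟫_ℂ)))
      (𝓝[>] 0)
      (𝓝 ((∫ t₁ in Set.Ioi (0 : ℝ), ∫ t₂ in (0 : ℝ)..t₁, φ (t₁, t₂) *
              (⟪g₁, L f₁⟫_ℂ * ⟪g₂, L f₂⟫_ℂ)) +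
          (∫ t in Set.Ioi (0 : ℝ), φ (t, t)) *
            ∫ s in Set.Ioi (0 : ℝ), ⟪g₂, L (S s f₁)⟫_ℂ * ⟪g₁, S (-s) f₂⟫_ℂ)) := by
  classical
  obtain ⟨ξ₀, hξ₀, h, hInt, hBd⟩ := hdom
  -- abbreviations
  set B : ℝ → ℝ → ℂ := fun ξ s =>
    ⟪g₂, (L * Ring.inverse (1 - (ξ : ℂ) • L)) (S s f₁)⟫_ℂ *
      ⟪g₁, (Ring.inverse (1 - (ξ : ℂ) • L)) (S (-s) f₂)⟫_ℂ with hB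
  set B₀ : ℝ → ℂ := fun s => ⟪g₂, L (S s f₁)⟫_ℂ * ⟪g₁, S (-s) f₂⟫_ℂ with hB₀
  set K : ℝ → ℝ × ℝ → ℂ := fun ξ =>
    Set.indicator {q : ℝ × ℝ | 0 < q.2 ∧ ξ * q.2 ≤ q.1}
      (fun q => φ (q.1, q.1 - ξ * q.2) * B ξ q.2) with hK
  set μ : Measure (ℝ × ℝ) :=
    (volume.restrict (Set.Ioi (0:ℝ))).prod (volume.restrict (Set.Ioi (0:ℝ))) with hμ
  set P : ℝ → ℂ := fun t₁ => ∫ t₂ in (0:ℝ)..t₁, φ (t₁, t₂) with hP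
  -- bound on φ
  obtain ⟨Cφ, hCφ⟩ : ∃ C : ℝ, ∀ p, ‖φ p‖ ≤ C := by
    obtain ⟨C, hC⟩ := (hφ.norm).bddAbove_range_of_hasCompactSupport hφc.norm
    exact ⟨C, fun p => hC (Set.mem_range_self p)⟩
  have hCφ0 : 0 ≤ Cφ := le_trans (norm_nonneg _) (hCφ 0)
  -- support radius
  obtain ⟨R, hR⟩ : ∃ R : ℝ, tsupport φ ⊆ Metric.closedBall 0 R :=
    hφc.isBounded.subset_closedBall 0
  have hφR : ∀ t₁ t₂ : ℝ, R < t₁ → φ (t₁, t₂) = 0 := by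
    intro t₁ t₂ hRt
    apply image_eq_zero_of_notMem_tsupport
    intro hmem
    have h1 := hR hmem
    rw [Metric.mem_closedBall, dist_zero_right] at h1
    have h2 : |t₁| ≤ ‖((t₁, t₂) : ℝ × ℝ)‖ := by
      simpa [Real.norm_eq_abs] using norm_fst_le ((t₁, t₂) : ℝ × ℝ)
    have h3 : t₁ ≤ |t₁| := le_abs_self _
    linarith
  -- h is nonneg on [0, ∞)
  have hh0 : ∀ s : ℝ, 0 ≤ s → 0 ≤ h s := fun s hs =>
    le_trans (norm_nonneg _) (hBd (ξ₀/2) (by positivity) (by linarith) s hs)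
  -- continuity of the resolvents
  have hMtend : Tendsto (fun ξ : ℝ => (Ring.inverse (1 - (ξ : ℂ) • L) : H →L[ℂ] H))
      (𝓝 0) (𝓝 1) := by
    have h1 : Continuous fun ξ : ℝ => (1 : H →L[ℂ] H) - (ξ : ℂ) • L :=
      continuous_const.sub (Complex.continuous_ofReal.smul continuous_const)
    have h2 : ContinuousAt (Ring.inverse : (H →L[ℂ] H) → _) (1 : H →L[ℂ] H) := by
      simpa using NormedRing.inverse_continuousAt (1 : (H →L[ℂ] H)ˣ)
    have haff : Tendsto (fun ξ : ℝ => (1 : H →L[ℂ] H) - (ξ : ℂ) • L) (𝓝 0) (𝓝 1) := by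
      simpa using h1.tendsto (0 : ℝ)
    simpa [Function.comp_def] using h2.tendsto.comp haff
  have hApplyL : ∀ g v : H, Tendsto (fun ξ : ℝ =>
      ⟪g, (L * Ring.inverse (1 - (ξ : ℂ) • L)) v⟫_ℂ) (𝓝 0) (𝓝 ⟪g, L v⟫_ℂ) := by
    intro g v
    have hc : Continuous fun T : H →L[ℂ] H => ⟪g, (L * T) v⟫_ℂ :=
      continuous_const.inner (L.continuous.comp (ContinuousLinearMap.apply ℂ H v).continuous)
    simpa [Function.comp_def] using (hc.continuousAt (x := (1 : H →L[ℂ] H))).tendsto.comp hMtend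
  have hApplyM : ∀ g v : H, Tendsto (fun ξ : ℝ =>
      ⟪g, (Ring.inverse (1 - (ξ : ℂ) • L) : H →L[ℂ] H) v⟫_ℂ) (𝓝 0) (𝓝 ⟪g, v⟫_ℂ) := by
    intro g v
    have hc : Continuous fun T : H →L[ℂ] H => ⟪g, T v⟫_ℂ :=
      continuous_const.inner (ContinuousLinearMap.apply ℂ H v).continuous
    simpa [Function.comp_def] using (hc.continuousAt (x := (1 : H →L[ℂ] H))).tendsto.comp hMtend
  have hBtend : ∀ s : ℝ, Tendsto (fun ξ : ℝ => B ξ s) (𝓝 0) (𝓝 (B₀ s)) := by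
    intro s
    exact (hApplyL g₂ (S s f₁)).mul (hApplyM g₁ (S (-s) f₂))
  have hBcont : ∀ ξ : ℝ, Continuous (B ξ) := by
    intro ξ
    exact (continuous_const.inner
        ((L * Ring.inverse (1 - (ξ : ℂ) • L)).continuous.comp (hScont f₁))).mul
      (continuous_const.inner
        ((Ring.inverse (1 - (ξ : ℂ) • L) : H →L[ℂ] H).continuous.comp
          ((hScont f₂).comp continuous_neg)))
  -- the measurable set and measurability of K
  have hAset : ∀ ξ : ℝ, MeasurableSet {q : ℝ × ℝ | 0 < q.2 ∧ ξ * q.2 ≤ q.1} := by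
    intro ξ
    rw [Set.setOf_and]
    exact (measurableSet_lt measurable_const measurable_snd).inter
      (measurableSet_le (measurable_snd.const_mul ξ) measurable_fst)
  have hmeasK : ∀ ξ : ℝ, AEStronglyMeasurable (K ξ) μ := by
    intro ξ
    have hc : Continuous fun q : ℝ × ℝ => φ (q.1, q.1 - ξ * q.2) * B ξ q.2 :=
      (hφ.comp (continuous_fst.prodMk
        (continuous_fst.sub (continuous_const.mul continuous_snd)))).mul
        ((hBcont ξ).comp continuous_snd)
    exact (hc.stronglyMeasurable.indicator (hAset ξ)).aestronglyMeasurable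
  -- a.e. membership in the positive quadrant
  have haeprod : ∀ᵐ p ∂μ, 0 < p.1 ∧ 0 < p.2 := by
    rw [hμ, Measure.prod_restrict]
    filter_upwards [ae_restrict_mem (measurableSet_Ioi.prod measurableSet_Ioi)] with p hp
    exact ⟨hp.1, hp.2⟩
  -- the dominating function
  set D : ℝ × ℝ → ℝ := fun p =>
    Set.indicator (Set.Icc (0:ℝ) R) (fun _ => Cφ) p.1 * h p.2 with hD
  have hD1int : Integrable (Set.indicator (Set.Icc (0:ℝ) R) (fun _ => Cφ))
      (volume.restrict (Set.Ioi (0:ℝ))) :=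
    ((integrableOn_const (μ := volume) (s := Set.Icc (0:ℝ) R) (C := Cφ) measure_Icc_lt_top.ne).integrable_indicator
      measurableSet_Icc).restrict
  have hhint : Integrable h (volume.restrict (Set.Ioi (0:ℝ))) :=
    hInt.mono_set Set.Ioi_subset_Ici_self
  have hDint : Integrable D μ := hD1int.mul_prod hhint
  -- the pointwise domination
  have hbd : ∀ ξ : ℝ, 0 < ξ → ξ < ξ₀ → ∀ᵐ p ∂μ, ‖K ξ p‖ ≤ D p := by
    intro ξ hξ1 hξ2
    filter_upwards [haeprod] with p hp
    have hDnn : 0 ≤ D p :=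
      mul_nonneg (Set.indicator_nonneg (fun _ _ => hCφ0) _) (hh0 _ hp.2.le)
    by_cases hmem : p ∈ {q : ℝ × ℝ | 0 < q.2 ∧ ξ * q.2 ≤ q.1}
    · simp only [hK]; rw [Set.indicator_of_mem hmem]
      by_cases hle : p.1 ≤ R
      · have hDval : D p = Cφ * h p.2 := by
          simp only [hD]
          rw [Set.indicator_of_mem (Set.mem_Icc.mpr ⟨hp.1.le, hle⟩)]
        rw [hDval, norm_mul]
        exact mul_le_mul (hCφ _) (hBd ξ hξ1 hξ2 p.2 hp.2.le) (norm_nonneg _) hCφ0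
      · have : φ (p.1, p.1 - ξ * p.2) = 0 := hφR _ _ (lt_of_not_ge hle)
        simp only [this, zero_mul, norm_zero]
        exact hDnn
    · simp only [hK]; rw [Set.indicator_of_notMem hmem]
      simpa using hDnn
  have hKint : ∀ ξ : ℝ, 0 < ξ → ξ < ξ₀ → Integrable (K ξ) μ := fun ξ h1 h2 =>
    hDint.mono' (hmeasK ξ) (hbd ξ h1 h2)
  -- pointwise limit
  have hKlim : ∀ᵐ p ∂μ, Tendsto (fun ξ : ℝ => K ξ p) (𝓝[>] (0:ℝ))
      (𝓝 (φ (p.1, p.1) * B₀ p.2)) := by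
    filter_upwards [haeprod] with p hp
    have hev : ∀ᶠ ξ : ℝ in 𝓝[>] (0:ℝ), K ξ p = φ (p.1, p.1 - ξ * p.2) * B ξ p.2 := by
      filter_upwards [Ioo_mem_nhdsGT (div_pos hp.1 hp.2)] with ξ hξ
      simp only [hK]
      refine Set.indicator_of_mem ?_ _
      simp only [Set.mem_setOf_eq]
      exact ⟨hp.2, le_of_lt ((lt_div_iff₀ hp.2).mp hξ.2)⟩
    have h1 : Tendsto (fun ξ : ℝ => φ (p.1, p.1 - ξ * p.2) * B ξ p.2) (𝓝[>] (0:ℝ))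
        (𝓝 (φ (p.1, p.1) * B₀ p.2)) := by
      apply Tendsto.mono_left _ nhdsWithin_le_nhds
      have hc : Continuous fun ξ : ℝ => φ (p.1, p.1 - ξ * p.2) :=
        hφ.comp (continuous_const.prodMk
          (continuous_const.sub (continuous_id.mul continuous_const)))
      have h2 : Tendsto (fun ξ : ℝ => φ (p.1, p.1 - ξ * p.2)) (𝓝 0)
          (𝓝 (φ (p.1, p.1))) := by simpa using hc.tendsto (0:ℝ)
      exact h2.mul (hBtend p.2)
    exact Tendsto.congr' (hev.mono fun ξ hh => hh.symm) h1
  -- dominated convergence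
  have hKey : Tendsto (fun ξ : ℝ => ∫ p, K ξ p ∂μ) (𝓝[>] (0:ℝ))
      (𝓝 (∫ p, φ (p.1, p.1) * B₀ p.2 ∂μ)) := by
    apply tendsto_integral_filter_of_dominated_convergence D
      (Eventually.of_forall hmeasK) _ hDint hKlim
    filter_upwards [Ioo_mem_nhdsGT hξ₀] with ξ hξ
    exact hbd ξ hξ.1 hξ.2
  have hval : (∫ p, φ (p.1, p.1) * B₀ p.2 ∂μ) =
      (∫ t in Set.Ioi (0:ℝ), φ (t, t)) * ∫ s in Set.Ioi (0:ℝ), B₀ s := by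
    simpa using integral_prod_mul (μ := volume.restrict (Set.Ioi (0:ℝ)))
      (ν := volume.restrict (Set.Ioi (0:ℝ))) (fun t : ℝ => φ (t, t)) B₀
  -- integrability of P
  have hPcont : Continuous P := by
    have huncurry : Function.uncurry (fun t₁ t₂ : ℝ => φ (t₁, t₂)) = φ := by
      ext p; simp [Function.uncurry]
    exact intervalIntegral.continuous_parametric_intervalIntegral_of_continuous
      (by rw [huncurry]; exact hφ) continuous_id
  have hPbound : ∀ᵐ t₁ ∂(volume.restrict (Set.Ioi (0:ℝ))),
      ‖P t₁‖ ≤ Set.indicator (Set.Icc (0:ℝ) R) (fun _ => Cφ * R) t₁ := by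
    filter_upwards [ae_restrict_mem measurableSet_Ioi] with t₁ ht₁
    by_cases hle : t₁ ≤ R
    · rw [Set.indicator_of_mem (Set.mem_Icc.mpr ⟨le_of_lt ht₁, hle⟩)]
      calc ‖P t₁‖ ≤ Cφ * |t₁ - 0| :=
            intervalIntegral.norm_integral_le_of_norm_le_const (fun x _ => hCφ _)
        _ = Cφ * t₁ := by rw [sub_zero, abs_of_pos ht₁]
        _ ≤ Cφ * R := mul_le_mul_of_nonneg_left hle hCφ0
    · have hz : ∀ t₂ : ℝ, φ (t₁, t₂) = 0 := fun t₂ => hφR _ _ (lt_of_not_ge hle)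
      have : P t₁ = 0 := by simp only [hP]; simp [hz]
      rw [this, norm_zero]
      exact Set.indicator_nonneg (fun a ha => mul_nonneg hCφ0 (le_trans ha.1 ha.2)) _
  have hPint : Integrable P (volume.restrict (Set.Ioi (0:ℝ))) := by
    apply Integrable.mono' _ hPcont.aestronglyMeasurable.restrict hPbound
    exact ((integrableOn_const (μ := volume) (s := Set.Icc (0:ℝ) R) (C := Cφ * R) measure_Icc_lt_top.ne).integrable_indicator
      measurableSet_Icc).restrict
  -- convergence of the constant term
  have hA : Tendsto (fun ξ : ℝ =>
      ⟪g₁, (L * Ring.inverse (1 - (ξ : ℂ) • L)) f₁⟫_ℂ *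
        ⟪g₂, (L * Ring.inverse (1 - (ξ : ℂ) • L)) f₂⟫_ℂ) (𝓝[>] (0:ℝ))
      (𝓝 (⟪g₁, L f₁⟫_ℂ * ⟪g₂, L f₂⟫_ℂ)) :=
    ((hApplyL g₁ f₁).mul (hApplyL g₂ f₂)).mono_left nhdsWithin_le_nhds
  -- the eventual identity
  have heq : ∀ᶠ ξ : ℝ in 𝓝[>] (0:ℝ),
      ((∫ t₁ in Set.Ioi (0:ℝ), P t₁) *
          (⟪g₁, (L * Ring.inverse (1 - (ξ : ℂ) • L)) f₁⟫_ℂ *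
            ⟪g₂, (L * Ring.inverse (1 - (ξ : ℂ) • L)) f₂⟫_ℂ) +
        ∫ p, K ξ p ∂μ) =
      ∫ t₁ in Set.Ioi (0 : ℝ), ∫ t₂ in (0 : ℝ)..t₁, φ (t₁, t₂) *
          (⟪g₁, (L * Ring.inverse (1 - (ξ : ℂ) • L)) f₁⟫_ℂ *
              ⟪g₂, (L * Ring.inverse (1 - (ξ : ℂ) • L)) f₂⟫_ℂ +
            (1 / ξ : ℂ) *
              (⟪g₂, (L * Ring.inverse (1 - (ξ : ℂ) • L)) (S ((t₁ - t₂) / ξ) f₁)⟫_ℂ *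
                ⟪g₁, (Ring.inverse (1 - (ξ : ℂ) • L)) (S ((t₂ - t₁) / ξ) f₂)⟫_ℂ)) := by
    filter_upwards [Ioo_mem_nhdsGT hξ₀] with ξ hξ
    set Aξ : ℂ := ⟪g₁, (L * Ring.inverse (1 - (ξ : ℂ) • L)) f₁⟫_ℂ *
      ⟪g₂, (L * Ring.inverse (1 - (ξ : ℂ) • L)) f₂⟫_ℂ with hAξ
    have hKi := hKint ξ hξ.1 hξ.2
    -- inner identity for each t₁ > 0
    have key_t : ∀ t₁ ∈ Set.Ioi (0:ℝ),
        (∫ t₂ in (0 : ℝ)..t₁, φ (t₁, t₂) *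
          (Aξ + (1 / ξ : ℂ) *
              (⟪g₂, (L * Ring.inverse (1 - (ξ : ℂ) • L)) (S ((t₁ - t₂) / ξ) f₁)⟫_ℂ *
                ⟪g₁, (Ring.inverse (1 - (ξ : ℂ) • L)) (S ((t₂ - t₁) / ξ) f₂)⟫_ℂ))) =
        P t₁ * Aξ + ∫ s in Set.Ioi (0:ℝ), K ξ (t₁, s) := by
      intro t₁ ht₁
      have hKpt : ∀ s : ℝ, K ξ (t₁, s) =
          Set.indicator (Set.Ioc (0:ℝ) (t₁/ξ)) (fun s => φ (t₁, t₁ - ξ*s) * B ξ s) s := by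
        intro s
        simp only [hK, Set.indicator_apply, Set.mem_setOf_eq, Set.mem_Ioc]
        refine if_congr ?_ rfl rfl
        exact and_congr_right fun _ => by rw [le_div_iff₀ hξ.1, mul_comm]
      have hIoc : (∫ s in Set.Ioi (0:ℝ), K ξ (t₁, s)) =
          ∫ s in (0:ℝ)..(t₁/ξ), φ (t₁, t₁ - ξ*s) * B ξ s := by
        simp only [hKpt]
        exact aux_ind _ (div_nonneg (le_of_lt ht₁) hξ.1.le) _
      rw [hIoc, ← aux_subst ξ t₁ hξ.1 (fun t₂ => φ (t₁, t₂)) (B ξ)]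
      simp only [hP]
      rw [← intervalIntegral.integral_mul_const]
      have hi1 : IntervalIntegrable (fun t₂ => φ (t₁, t₂) * Aξ) volume 0 t₁ :=
        ((hφ.comp (continuous_const.prodMk continuous_id)).mul
          continuous_const).intervalIntegrable 0 t₁
      have hi2 : IntervalIntegrable
          (fun t₂ => φ (t₁, t₂) * ((1/ξ : ℂ) * B ξ ((t₁ - t₂)/ξ))) volume 0 t₁ :=
        ((hφ.comp (continuous_const.prodMk continuous_id)).mul
          (continuous_const.mul ((hBcont ξ).comp
            ((continuous_const.sub continuous_id).div_const ξ)))).intervalIntegrable 0 t₁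
      rw [← intervalIntegral.integral_add hi1 hi2]
      apply intervalIntegral.integral_congr
      intro t₂ _
      simp only [hB]
      have harg : S ((t₂ - t₁) / ξ) f₂ = S (-((t₁ - t₂) / ξ)) f₂ := by
        congr 1; ring
      rw [harg]
      ring
    -- outer identity
    have hJint : Integrable (fun t₁ => ∫ s in Set.Ioi (0:ℝ), K ξ (t₁, s))
        (volume.restrict (Set.Ioi (0:ℝ))) := hKi.integral_prod_left
    have hPA : Integrable (fun t₁ => P t₁ * Aξ) (volume.restrict (Set.Ioi (0:ℝ))) :=
      hPint.mul_const Aξ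
    refine Eq.trans ?_ (setIntegral_congr_fun measurableSet_Ioi
      (fun t₁ ht₁ => key_t t₁ ht₁)).symm
    rw [integral_add hPA hJint, integral_mul_const]
    congr 1
    rw [hμ, integral_prod _ hKi]
  -- final value identity for the constant term
  have htarget1 : (∫ t₁ in Set.Ioi (0 : ℝ), ∫ t₂ in (0 : ℝ)..t₁, φ (t₁, t₂) *
      (⟪g₁, L f₁⟫_ℂ * ⟪g₂, L f₂⟫_ℂ)) =
      (∫ t₁ in Set.Ioi (0:ℝ), P t₁) * (⟪g₁, L f₁⟫_ℂ * ⟪g₂, L f₂⟫_ℂ) := by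
    simp only [intervalIntegral.integral_mul_const]
    rw [integral_mul_const]
  rw [htarget1, ← hval]
  exact Tendsto.congr' heq ((hA.const_mul (∫ t₁ in Set.Ioi (0:ℝ), P t₁)).add hKey)
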